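/- Per-trajectory vs. per-step concentrability gap (Proposition): For any S ≥ 1, A ≥ 2, H ≥ 1, C ≥ 1, there exists an MDP with |S| states, |A| actions, horizon H, a Markovian target policy π_tar and a behavior policy π_b (with μ0 = d^{π_b}) such that the per-step concentrability C_st := max_{s,a,h} d^{π_tar}_h(s,a)/μ_{0,h}(s,a) equals C while the per-trajectory concentrability C_tr := max_τ d^{π_tar}(τ)/μ0(τ) equals C^H. -/
import Mathlib


/-- State visitation distribution at step `h` of a stochastic Markovian policy. -/
noncomputable def dStateS {S A : Type*} [Fintype S] [Fintype A]
    (ρ : S → ℝ) (P : ℕ → S → A → S → ℝ) (π : ℕ → S → A → ℝ) : ℕ → S → ℝ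
  | 0 => ρ
  | h + 1 => fun s' => ∑ s : S, ∑ a : A, dStateS ρ P π h s * π h s a * P h s a s'

/-- Probability of a full trajectory `τ` under a stochastic Markovian policy `π`,
initial distribution `ρ` and transitions `P`. -/
noncomputable def trajProbM {S A : Type*} (H : ℕ) (ρ : S → ℝ)
    (P : ℕ → S → A → S → ℝ) (π : ℕ → S → A → ℝ) (τ : Fin H → S × A) : ℝ :=
  ∏ h : Fin H,
    (if h.1 = 0 then ρ (τ h).1
     else
       P (h.1 - 1) (τ ⟨h.1 - 1, lt_of_le_of_lt (Nat.sub_le _ _) h.isLt⟩).1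
         (τ ⟨h.1 - 1, lt_of_le_of_lt (Nat.sub_le _ _) h.isLt⟩).2 (τ h).1) *
    π h.1 (τ h).1 (τ h).2

/-- The per-trajectory concentrability coefficient can be `C^H` while the per-step
concentrability coefficient is `C`. -/
theorem stmt_13 (S A H : ℕ) (hS : 1 ≤ S) (hA : 2 ≤ A) (hH : 1 ≤ H)
    (C : ℝ) (hC : 1 ≤ C) :
    ∃ (ρ : Fin S → ℝ) (P : ℕ → Fin S → Fin A → Fin S → ℝ)
      (πtar πb : ℕ → Fin S → Fin A → ℝ),
      (∀ s, 0 ≤ ρ s) ∧ (∑ s : Fin S, ρ s = 1) ∧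
      (∀ h s a s', 0 ≤ P h s a s') ∧ (∀ h s a, ∑ s' : Fin S, P h s a s' = 1) ∧
      (∀ h s a, 0 ≤ πtar h s a) ∧ (∀ h s, ∑ a : Fin A, πtar h s a = 1) ∧
      (∀ h s a, 0 ≤ πb h s a) ∧ (∀ h s, ∑ a : Fin A, πb h s a = 1) ∧
      -- per-step concentrability equals C
      (∀ h, h < H → ∀ s a,
        dStateS ρ P πtar h s * πtar h s a ≤ C * (dStateS ρ P πb h s * πb h s a)) ∧
      (∃ h, h < H ∧ ∃ s a, 0 < dStateS ρ P πb h s * πb h s a ∧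
        dStateS ρ P πtar h s * πtar h s a = C * (dStateS ρ P πb h s * πb h s a)) ∧
      -- per-trajectory concentrability equals C^H
      (∀ τ : Fin H → Fin S × Fin A,
        trajProbM H ρ P πtar τ ≤ C ^ H * trajProbM H ρ P πb τ) ∧
      (∃ τ : Fin H → Fin S × Fin A, 0 < trajProbM H ρ P πb τ ∧
        trajProbM H ρ P πtar τ = C ^ H * trajProbM H ρ P πb τ) := by
  have hC0 : (0:ℝ) < C := lt_of_lt_of_le one_pos hC
  set s0 : Fin S := ⟨0, hS⟩ with hs0
  set a0 : Fin A := ⟨0, by omega⟩ with ha0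
  set a1 : Fin A := ⟨1, by omega⟩ with ha1
  have ha01 : a0 ≠ a1 := by simp [ha0, ha1, Fin.ext_iff]
  set ρ : Fin S → ℝ := fun s => if s = s0 then 1 else 0 with hρ
  set P : ℕ → Fin S → Fin A → Fin S → ℝ := fun _ _ _ s' => if s' = s0 then 1 else 0 with hP
  set πtar : ℕ → Fin S → Fin A → ℝ := fun _ _ a => if a = a0 then 1 else 0 with hπt
  set πb : ℕ → Fin S → Fin A → ℝ :=
    fun _ _ a => (if a = a0 then 1/C else 0) + (if a = a1 then 1 - 1/C else 0) with hπb
  have hπbnn : ∀ h s a, 0 ≤ πb h s a := by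
    intro h s a
    have h1 : (0:ℝ) ≤ 1/C := by positivity
    have h2 : (0:ℝ) ≤ 1 - 1/C := by
      have : 1/C ≤ 1 := by
        rw [div_le_one hC0]; exact hC
      linarith
    simp only [hπb]
    split <;> split <;> simp_all <;> linarith
  have hπbsum : ∀ h s, ∑ a : Fin A, πb h s a = 1 := by
    intro h s
    simp only [hπb, Finset.sum_add_distrib, Finset.sum_ite_eq', Finset.mem_univ, if_true]
    ring
  have hπtsum : ∀ h s, ∑ a : Fin A, πtar h s a = 1 := by
    intro h s
    simp [hπt]
  -- key pointwise bound
  have hkey : ∀ (h : ℕ) (s : Fin S) (a : Fin A), πtar h s a ≤ C * πb h s a := by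
    intro h s a
    simp only [hπt, hπb]
    by_cases h0 : a = a0
    · have : a ≠ a1 := h0 ▸ ha01
      simp [h0, this, ha01]
      exact le_of_eq (mul_inv_cancel₀ hC0.ne').symm
    · by_cases h1 : a = a1
      · have h2 : (0:ℝ) ≤ 1 - 1/C := by
          have : 1/C ≤ 1 := by rw [div_le_one hC0]; exact hC
          linarith
        simp only [h0, h1, if_neg (Ne.symm ha01), zero_add]
        exact mul_nonneg hC0.le h2
      · simp [h0, h1]
  -- state distribution is the same indicator for any policy with row sums 1
  have hd : ∀ (π : ℕ → Fin S → Fin A → ℝ), (∀ h s, ∑ a : Fin A, π h s a = 1) →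
      ∀ h s, dStateS ρ P π h s = if s = s0 then 1 else 0 := by
    intro π hsum h
    induction h with
    | zero => intro s; rfl
    | succ n ih =>
      intro s'
      show (∑ s : Fin S, ∑ a : Fin A, dStateS ρ P π n s * π n s a * P n s a s')
        = if s' = s0 then 1 else 0
      simp only [hP]
      calc (∑ s : Fin S, ∑ a : Fin A, dStateS ρ P π n s * π n s a * (if s' = s0 then 1 else 0))
          = (if s' = s0 then 1 else 0) * ∑ s : Fin S, dStateS ρ P π n s * ∑ a : Fin A, π n s a := by
            rw [Finset.mul_sum]
            congr 1; ext s
            rw [Finset.mul_sum, Finset.mul_sum]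
            congr 1; ext a; ring
        _ = if s' = s0 then 1 else 0 := by
            simp only [hsum, mul_one, ih]
            simp
  have hdt := hd πtar hπtsum
  have hdb := hd πb hπbsum
  refine ⟨ρ, P, πtar, πb, ?_, ?_, ?_, ?_, ?_, hπtsum, hπbnn, hπbsum, ?_, ?_, ?_, ?_⟩
  · intro s; simp only [hρ]; split <;> norm_num
  · simp [hρ]
  · intro h s a s'; simp only [hP]; split <;> norm_num
  · intro h s a; simp [hP]
  · intro h s a; simp only [hπt]; split <;> norm_num
  · -- per-step inequality
    intro h _ s a
    rw [hdt, hdb]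
    by_cases hs : s = s0
    · simp only [hs, if_true, one_mul]
      exact hkey h s0 a
    · simp [hs]
  · -- per-step equality witness
    refine ⟨0, hH, s0, a0, ?_, ?_⟩
    · rw [hdb]
      have : a0 ≠ a1 := ha01
      simp [hπb, this, ha01]
      positivity
    · rw [hdt, hdb]
      have : a0 ≠ a1 := ha01
      simp [hπt, hπb, this, ha01]
      exact (mul_inv_cancel₀ hC0.ne').symm
  · -- trajectory inequality
    intro τ
    unfold trajProbM
    rw [show (C ^ H : ℝ) = ∏ _h : Fin H, C by simp,
      ← Finset.prod_mul_distrib]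
    apply Finset.prod_le_prod
    · intro h _
      apply mul_nonneg
      · split
        · simp only [hρ]; split <;> norm_num
        · simp only [hP]; split <;> norm_num
      · simp only [hπt]; split <;> norm_num
    · intro h _
      have key2 : ∀ (x y z : ℝ), 0 ≤ x → y ≤ C * z → x * y ≤ C * (x * z) := by
        intro x y z hx hyz
        calc x * y ≤ x * (C * z) := mul_le_mul_of_nonneg_left hyz hx
          _ = C * (x * z) := by ring
      apply key2
      · split
        · simp only [hρ]; split <;> norm_num
        · simp only [hP]; split <;> norm_num
      · exact hkey h.1 (τ h).1 (τ h).2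
  · -- trajectory equality witness
    refine ⟨fun _ => (s0, a0), ?_, ?_⟩
    · unfold trajProbM
      have : ∀ h : Fin H,
          ((if h.1 = 0 then ρ s0 else P (h.1-1) s0 a0 s0) * πb h.1 s0 a0) = 1/C := by
        intro h
        have : a0 ≠ a1 := ha01
        simp [hρ, hP, hπb, this]
      simp only [this]
      rw [Finset.prod_const]
      positivity
    · unfold trajProbM
      have h1 : ∀ h : Fin H,
          ((if h.1 = 0 then ρ s0 else P (h.1-1) s0 a0 s0) * πtar h.1 s0 a0) = 1 := by
        intro h; simp [hρ, hP, hπt]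
      have h2 : ∀ h : Fin H,
          ((if h.1 = 0 then ρ s0 else P (h.1-1) s0 a0 s0) * πb h.1 s0 a0) = 1/C := by
        intro h
        have : a0 ≠ a1 := ha01
        simp [hρ, hP, hπb, this]
      simp only [h1, h2]
      rw [Finset.prod_const, Finset.prod_const, Finset.card_univ, Fintype.card_fin]
      rw [div_pow, one_pow, mul_one_div, div_self (by positivity)]
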